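/- arXiv:math/0304164 — 3 statements merged into one kernel-verified Lean document; each statement's English description precedes it below -/
import Mathlib

section
/- In any coaugmented k-coalgebra C, the inclusion–exclusion maps agree with the closed formula: for every n ≥ 1, δ'_{{1,…,n}} = (id_C − u∘ε)^{⊗n} ∘ Δ^n, where δ'_Φ := Σ_{Ψ⊆Φ} (−1)^{|Φ|−|Ψ|} Δ_Ψ. (Lemma 2.6(a)) -/
open TensorProduct PiTensorProduct

noncomputable section

namespace CDP

variable (k : Type) [Field k] (C : Type) [AddCommGroup C] [Module k C]

/-- The canonical equivalence `⨂[k]^1 C ≃ C`. -/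
def tpowOne : (⨂[k]^1 C) ≃ₗ[k] C := PiTensorProduct.subsingletonEquiv (0 : Fin 1)

/-- Splitting a tensor power. -/
def tpowSplit (a b : ℕ) : (⨂[k]^(a+b) C) ≃ₗ[k] (⨂[k]^a C) ⊗[k] (⨂[k]^b C) :=
  (PiTensorProduct.reindex k (fun _ : Fin (a+b) => C) finSumFinEquiv.symm).trans
    (PiTensorProduct.tmulEquiv k C).symm

/-- Prepending a tensor factor. -/
def consTP (n : ℕ) : C ⊗[k] (⨂[k]^n C) →ₗ[k] ⨂[k]^(n+1) C :=
  (PiTensorProduct.reindex k (fun _ : Fin (1+n) => C)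
      (finCongr (Nat.add_comm 1 n))).toLinearMap ∘ₗ
    (tpowSplit k C 1 n).symm.toLinearMap ∘ₗ
    (TensorProduct.map (tpowOne k C).symm.toLinearMap LinearMap.id)

variable {C} in
/-- The iterated comultiplication `Δ^n : C → C^{⊗ n}`, with `Δ^0 := ε` and
`Δ^1 = id` (up to the canonical identification `C ≅ C^{⊗1}`). -/
def DeltaIter (comul : C →ₗ[k] C ⊗[k] C) (counit : C →ₗ[k] k) :
    (n : ℕ) → (C →ₗ[k] ⨂[k]^n C)
  | 0 => (PiTensorProduct.isEmptyEquiv (Fin 0)).symm.toLinearMap ∘ₗ counit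
  | n+1 => consTP k C n ∘ₗ
      (TensorProduct.map LinearMap.id (DeltaIter comul counit n)) ∘ₗ comul

variable {C} in
/-- The projection `id - u ∘ ε` associated to the coaugmentation `one = u(1)`. -/
def proj (counit : C →ₗ[k] k) (one : C) : C →ₗ[k] C :=
  LinearMap.id - (LinearMap.toSpanSingleton k C one) ∘ₗ counit

variable {C} in
/-- Drinfeld's maps `δ_n := (id - u∘ε)^{⊗n} ∘ Δ^n`. -/
def deltaN (comul : C →ₗ[k] C ⊗[k] C) (counit : C →ₗ[k] k) (one : C) (n : ℕ) :
    C →ₗ[k] ⨂[k]^n C :=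
  (PiTensorProduct.map fun _ : Fin n => proj k counit one) ∘ₗ DeltaIter k comul counit n

variable {C} in
/-- The map `Δ_Ψ := j_Ψ ∘ Δ^{|Ψ|} : C → C^{⊗ n}`, where
`j_Ψ : C^{⊗ |Ψ|} → C^{⊗ n}` inserts the group-like element `one` in the slots
outside `Ψ` (using the increasing identification of `Fin |Ψ|` with `Ψ`). -/
def DeltaSub (comul : C →ₗ[k] C ⊗[k] C) (counit : C →ₗ[k] k) (one : C)
    {n : ℕ} (Ψ : Finset (Fin n)) : C →ₗ[k] ⨂[k]^n C :=
  (PiTensorProduct.lift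
      ((PiTensorProduct.tprod k (s := fun _ : Fin n => C)).restr Ψ rfl one)) ∘ₗ
    DeltaIter k comul counit Ψ.card

end CDP

open CDP

namespace IEAux

/-! ### Finset combinatorics on `Fin (n+1)` -/

variable {n : ℕ}

/-- The "tail" of a subset of `Fin (n+1)`. -/
def tl (Ψ : Finset (Fin (n + 1))) : Finset (Fin n) :=
  Ψ.preimage Fin.succ ((Fin.succ_injective n).injOn)

lemma mem_tl {Ψ : Finset (Fin (n + 1))} {i : Fin n} : i ∈ tl Ψ ↔ i.succ ∈ Ψ :=
  Finset.mem_preimage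

lemma map_tl (Ψ : Finset (Fin (n + 1))) :
    (tl Ψ).map ⟨Fin.succ, Fin.succ_injective n⟩ = Ψ.erase 0 := by
  ext j
  simp only [Finset.mem_map, Finset.mem_erase, Function.Embedding.coeFn_mk]
  constructor
  · rintro ⟨i, hi, rfl⟩
    exact ⟨Fin.succ_ne_zero i, mem_tl.1 hi⟩
  · rintro ⟨hj0, hj⟩
    obtain ⟨i, rfl⟩ := Fin.exists_succ_eq.2 hj0
    exact ⟨i, mem_tl.2 hj, rfl⟩

lemma card_tl_of_not_mem {Ψ : Finset (Fin (n + 1))} (h0 : (0 : Fin (n + 1)) ∉ Ψ) :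
    Ψ.card = (tl Ψ).card := by
  conv_lhs => rw [← Finset.erase_eq_of_notMem h0, ← map_tl]
  rw [Finset.card_map]

lemma card_tl_of_mem {Ψ : Finset (Fin (n + 1))} (h0 : (0 : Fin (n + 1)) ∈ Ψ) :
    Ψ.card = (tl Ψ).card + 1 := by
  conv_lhs => rw [← Finset.insert_erase h0]
  rw [Finset.card_insert_of_notMem (Finset.notMem_erase _ _), ← map_tl, Finset.card_map]

lemma orderEmb_of_not_mem {Ψ : Finset (Fin (n + 1))} (h0 : (0 : Fin (n + 1)) ∉ Ψ)
    (h : Ψ.card = (tl Ψ).card) (i : Fin (tl Ψ).card) :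
    Ψ.orderEmbOfFin h i = ((tl Ψ).orderEmbOfFin rfl i).succ := by
  have hu := Finset.orderEmbOfFin_unique (s := Ψ)
    (f := fun i => ((tl Ψ).orderEmbOfFin rfl i).succ) h
    (fun i => mem_tl.1 (Finset.orderEmbOfFin_mem _ rfl i))
    (Fin.strictMono_succ.comp ((tl Ψ).orderEmbOfFin rfl).strictMono)
  exact (congrFun hu i).symm

lemma orderEmb_of_mem {Ψ : Finset (Fin (n + 1))} (h0 : (0 : Fin (n + 1)) ∈ Ψ)
    (h : Ψ.card = (tl Ψ).card + 1) (i : Fin ((tl Ψ).card + 1)) :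
    Ψ.orderEmbOfFin h i
      = Fin.cons (α := fun _ => Fin (n + 1)) 0 (fun j => ((tl Ψ).orderEmbOfFin rfl j).succ) i := by
  set f : Fin ((tl Ψ).card + 1) → Fin (n + 1) :=
    Fin.cons (α := fun _ => Fin (n + 1)) 0 (fun j => ((tl Ψ).orderEmbOfFin rfl j).succ) with hf
  have hmem : ∀ i, f i ∈ Ψ := by
    intro i
    refine Fin.cases ?_ (fun j => ?_) i
    · simpa [hf] using h0
    · simpa [hf] using mem_tl.1 (Finset.orderEmbOfFin_mem _ rfl j)
  have hmono : StrictMono f := by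
    intro a b hab
    refine Fin.cases (motive := fun b => ∀ a : Fin ((tl Ψ).card + 1), a < b → f a < f b)
      ?_ ?_ b a hab
    · intro a ha; exact absurd ha (Fin.not_lt_zero a)
    · intro j a
      refine Fin.cases (motive := fun a => a < j.succ → f a < f j.succ) ?_ ?_ a
      · intro _
        simp only [hf, Fin.cons_zero, Fin.cons_succ]
        exact Fin.succ_pos _
      · intro l hl
        simp only [hf, Fin.cons_succ]
        exact Fin.succ_lt_succ_iff.2 (((tl Ψ).orderEmbOfFin rfl).strictMono
          (Fin.succ_lt_succ_iff.1 hl))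
  exact (congrFun (Finset.orderEmbOfFin_unique h hmem hmono) i).symm

lemma orderIso_symm_succ_of_not_mem {Ψ : Finset (Fin (n + 1))}
    (h0 : (0 : Fin (n + 1)) ∉ Ψ) (h : Ψ.card = (tl Ψ).card)
    {i : Fin n} (hi : i.succ ∈ Ψ) :
    (Ψ.orderIsoOfFin h).symm ⟨i.succ, hi⟩
      = ((tl Ψ).orderIsoOfFin rfl).symm ⟨i, mem_tl.2 hi⟩ := by
  apply (Ψ.orderIsoOfFin h).injective
  rw [OrderIso.apply_symm_apply]
  apply Subtype.ext
  rw [Finset.coe_orderIsoOfFin_apply, orderEmb_of_not_mem h0 h]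
  have : (tl Ψ).orderEmbOfFin rfl (((tl Ψ).orderIsoOfFin rfl).symm ⟨i, mem_tl.2 hi⟩)
      = ((tl Ψ).orderIsoOfFin rfl (((tl Ψ).orderIsoOfFin rfl).symm ⟨i, mem_tl.2 hi⟩) : _) :=
    (Finset.coe_orderIsoOfFin_apply _ _ _).symm
  rw [this, OrderIso.apply_symm_apply]

lemma orderIso_symm_zero_of_mem {Ψ : Finset (Fin (n + 1))}
    (h0 : (0 : Fin (n + 1)) ∈ Ψ) (h : Ψ.card = (tl Ψ).card + 1) :
    (Ψ.orderIsoOfFin h).symm ⟨0, h0⟩ = 0 := by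
  apply (Ψ.orderIsoOfFin h).injective
  rw [OrderIso.apply_symm_apply]
  apply Subtype.ext
  rw [Finset.coe_orderIsoOfFin_apply, orderEmb_of_mem h0 h]
  simp

lemma orderIso_symm_succ_of_mem {Ψ : Finset (Fin (n + 1))}
    (h0 : (0 : Fin (n + 1)) ∈ Ψ) (h : Ψ.card = (tl Ψ).card + 1)
    {i : Fin n} (hi : i.succ ∈ Ψ) :
    (Ψ.orderIsoOfFin h).symm ⟨i.succ, hi⟩
      = (((tl Ψ).orderIsoOfFin rfl).symm ⟨i, mem_tl.2 hi⟩).succ := by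
  apply (Ψ.orderIsoOfFin h).injective
  rw [OrderIso.apply_symm_apply]
  apply Subtype.ext
  rw [Finset.coe_orderIsoOfFin_apply, orderEmb_of_mem h0 h]
  have : (tl Ψ).orderEmbOfFin rfl (((tl Ψ).orderIsoOfFin rfl).symm ⟨i, mem_tl.2 hi⟩)
      = ((tl Ψ).orderIsoOfFin rfl (((tl Ψ).orderIsoOfFin rfl).symm ⟨i, mem_tl.2 hi⟩) : _) :=
    (Finset.coe_orderIsoOfFin_apply _ _ _).symm
  rw [Fin.cons_succ, this, OrderIso.apply_symm_apply]


/-! ### Tensor power lemmas -/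

variable (k : Type) [Field k] (C : Type) [AddCommGroup C] [Module k C]

theorem consTP_tmul_tprod (n : ℕ) (x : C) (v : Fin n → C) :
    consTP k C n (x ⊗ₜ[k] PiTensorProduct.tprod k v) = PiTensorProduct.tprod k (Fin.cons x v) := by
  simp only [consTP, tpowSplit, tpowOne, LinearMap.coe_comp, LinearEquiv.coe_coe,
    Function.comp_apply, map_tmul, LinearMap.id_coe, id_eq]
  rw [PiTensorProduct.subsingletonEquiv_symm_apply]
  rw [LinearEquiv.trans_symm, LinearEquiv.trans_apply, LinearEquiv.symm_symm]
  rw [PiTensorProduct.tmulEquiv_apply, ← PiTensorProduct.reindex_symm,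
    LinearEquiv.symm_symm, PiTensorProduct.reindex_tprod, PiTensorProduct.reindex_tprod]
  congr 1
  funext j
  refine Fin.cases ?_ (fun i => ?_) j
  · simp only [Fin.cons_zero]
    rw [show ((finCongr (Nat.add_comm 1 n)).symm (0 : Fin (n+1)))
        = finSumFinEquiv (Sum.inl (0 : Fin 1)) from rfl,
      Equiv.symm_apply_apply]
    rfl
  · simp only [Fin.cons_succ]
    rw [show ((finCongr (Nat.add_comm 1 n)).symm i.succ) = finSumFinEquiv (Sum.inr i) from by
        apply Fin.ext; simp [Nat.add_comm],
      Equiv.symm_apply_apply]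
    rfl

/-- Pushing a tensor of maps through `consTP`. -/
theorem map_comp_consTP (n : ℕ) (f : Fin (n + 1) → (C →ₗ[k] C)) :
    PiTensorProduct.map f ∘ₗ consTP k C n
      = consTP k C n ∘ₗ TensorProduct.map (f 0) (PiTensorProduct.map (fun i => f i.succ)) := by
  apply TensorProduct.ext'
  intro x y
  induction y using PiTensorProduct.induction_on with
  | smul_tprod r v =>
    simp only [tmul_smul, map_smul]
    congr 1
    simp only [LinearMap.coe_comp, Function.comp_apply, map_tmul, consTP_tmul_tprod,
      PiTensorProduct.map_tprod, LinearMap.id_coe, id_eq]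
    congr 1
    funext j
    refine Fin.cases ?_ (fun i => ?_) j <;> simp
  | add a b ha hb =>
    simp only [tmul_add, map_add, ha, hb]

variable {C} in
theorem DeltaSub_card_cast (comul : C →ₗ[k] C ⊗[k] C) (counit : C →ₗ[k] k) (one : C)
    {n : ℕ} (Ψ : Finset (Fin n)) {m : ℕ} (h : Ψ.card = m) :
    DeltaSub k comul counit one Ψ
      = (PiTensorProduct.lift
          ((PiTensorProduct.tprod k (s := fun _ : Fin n => C)).restr Ψ h one)) ∘ₗ
        DeltaIter k comul counit m := by
  subst h; rfl

/-- `restr` through `consTP`, case `0 ∉ Ψ`. -/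
theorem restr_not_mem {n : ℕ} (one : C) (Ψ : Finset (Fin (n + 1)))
    (h0 : (0 : Fin (n + 1)) ∉ Ψ) (h : Ψ.card = (tl Ψ).card) :
    (PiTensorProduct.lift
        ((PiTensorProduct.tprod k (s := fun _ : Fin (n+1) => C)).restr Ψ h one))
      = consTP k C n ∘ₗ TensorProduct.mk k C _ one ∘ₗ
        (PiTensorProduct.lift
          ((PiTensorProduct.tprod k (s := fun _ : Fin n => C)).restr (tl Ψ) rfl one)) := by
  apply LinearMap.ext
  intro y
  induction y using PiTensorProduct.induction_on with
  | smul_tprod r v =>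
    simp only [map_smul]
    congr 1
    simp only [LinearMap.coe_comp, Function.comp_apply, PiTensorProduct.lift.tprod]
    show PiTensorProduct.tprod k _ = consTP k C n (one ⊗ₜ[k] PiTensorProduct.tprod k _)
    rw [consTP_tmul_tprod]
    congr 1
    funext j
    refine Fin.cases ?_ (fun i => ?_) j
    · rw [dif_neg h0, Fin.cons_zero]
    · rw [Fin.cons_succ]
      by_cases hi : i.succ ∈ Ψ
      · rw [dif_pos hi, dif_pos (mem_tl.2 hi), orderIso_symm_succ_of_not_mem h0 h hi]
      · rw [dif_neg hi, dif_neg (fun hc => hi (mem_tl.1 hc))]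
  | add a b ha hb =>
    simp only [map_add, ha, hb]

/-- `restr` through `consTP`, case `0 ∈ Ψ`. -/
theorem restr_mem {n : ℕ} (one : C) (Ψ : Finset (Fin (n + 1)))
    (h0 : (0 : Fin (n + 1)) ∈ Ψ) (h : Ψ.card = (tl Ψ).card + 1) :
    (PiTensorProduct.lift
        ((PiTensorProduct.tprod k (s := fun _ : Fin (n+1) => C)).restr Ψ h one))
      ∘ₗ consTP k C (tl Ψ).card
      = consTP k C n ∘ₗ TensorProduct.map LinearMap.id
        (PiTensorProduct.lift
          ((PiTensorProduct.tprod k (s := fun _ : Fin n => C)).restr (tl Ψ) rfl one)) := by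
  apply TensorProduct.ext'
  intro x y
  induction y using PiTensorProduct.induction_on with
  | smul_tprod r v =>
    simp only [tmul_smul, map_smul]
    congr 1
    simp only [LinearMap.coe_comp, Function.comp_apply, map_tmul, LinearMap.id_coe, id_eq,
      PiTensorProduct.lift.tprod, consTP_tmul_tprod]
    show PiTensorProduct.tprod k (fun j => if hj : j ∈ Ψ then
        Fin.cons (α := fun _ => C) x v ((Ψ.orderIsoOfFin h).symm ⟨j, hj⟩) else one)
      = consTP k C n (x ⊗ₜ[k] PiTensorProduct.tprod k
          (fun i => if hi : i ∈ tl Ψ then v (((tl Ψ).orderIsoOfFin rfl).symm ⟨i, hi⟩) else one))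
    rw [consTP_tmul_tprod]
    congr 1
    funext j
    refine Fin.cases ?_ (fun i => ?_) j
    · rw [dif_pos h0, orderIso_symm_zero_of_mem h0 h, Fin.cons_zero, Fin.cons_zero]
    · rw [Fin.cons_succ]
      by_cases hi : i.succ ∈ Ψ
      · rw [dif_pos hi, dif_pos (mem_tl.2 hi), orderIso_symm_succ_of_mem h0 h hi,
          Fin.cons_succ]
      · rw [dif_neg hi, dif_neg (fun hc => hi (mem_tl.1 hc))]
  | add a b ha hb =>
    simp only [tmul_add, map_add, ha, hb]


variable {C} in
theorem comul_counit_lemma (comul : C →ₗ[k] C ⊗[k] C) (counit : C →ₗ[k] k) (one : C)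
    (hcu : counit.rTensor C ∘ₗ comul = TensorProduct.mk k k C 1)
    {M : Type} [AddCommGroup M] [Module k M] (F : C →ₗ[k] M) :
    TensorProduct.map (LinearMap.toSpanSingleton k C one ∘ₗ counit) F ∘ₗ comul
      = TensorProduct.mk k C M one ∘ₗ F := by
  have h1 : TensorProduct.map (LinearMap.toSpanSingleton k C one ∘ₗ counit) F
      = TensorProduct.map (LinearMap.toSpanSingleton k C one) F ∘ₗ counit.rTensor C := by
    apply TensorProduct.ext'
    intro x y
    simp [LinearMap.rTensor]
  rw [h1, LinearMap.comp_assoc, hcu]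
  apply LinearMap.ext; intro x
  simp

variable {C} in
theorem key (comul : C →ₗ[k] C ⊗[k] C) (counit : C →ₗ[k] k) (one : C)
    (hcu : counit.rTensor C ∘ₗ comul = TensorProduct.mk k k C 1) :
    ∀ (n : ℕ) (Ψ : Finset (Fin n)),
      PiTensorProduct.map (fun i => if i ∈ Ψ then LinearMap.id
          else LinearMap.toSpanSingleton k C one ∘ₗ counit) ∘ₗ DeltaIter k comul counit n
        = DeltaSub k comul counit one Ψ := by
  intro n
  induction n with
  | zero =>
    intro Ψ
    have hΨ : Ψ = ∅ := Finset.eq_empty_of_forall_notMem (fun x _ => x.elim0)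
    subst hΨ
    rw [DeltaSub_card_cast k comul counit one ∅ (m := 0) rfl]
    apply LinearMap.ext; intro x
    simp only [LinearMap.comp_apply]
    have h0 : DeltaIter k comul counit 0 x
        = counit x • PiTensorProduct.tprod k (isEmptyElim : (i : Fin 0) → C) := rfl
    rw [h0, map_smul, map_smul, PiTensorProduct.map_tprod, PiTensorProduct.lift.tprod]
    congr 1
    show PiTensorProduct.tprod k _ = PiTensorProduct.tprod k _
    exact congrArg _ (Subsingleton.elim _ _)
  | succ n ih =>
    intro Ψ
    set e := LinearMap.toSpanSingleton k C one ∘ₗ counit with he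
    set g : Fin (n+1) → (C →ₗ[k] C) := fun i => if i ∈ Ψ then LinearMap.id else e with hg
    have hDI : DeltaIter k comul counit (n+1)
        = consTP k C n ∘ₗ TensorProduct.map LinearMap.id (DeltaIter k comul counit n)
          ∘ₗ comul := rfl
    have htail : (fun i : Fin n => g i.succ)
        = fun i => if i ∈ tl Ψ then LinearMap.id else e := by
      funext i
      simp only [hg]
      by_cases hi : i ∈ tl Ψ
      · rw [if_pos (mem_tl.1 hi), if_pos hi]
      · rw [if_neg (fun hc => hi (mem_tl.2 hc)), if_neg hi]
    have step1 : PiTensorProduct.map g ∘ₗ DeltaIter k comul counit (n+1)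
        = consTP k C n ∘ₗ TensorProduct.map (g 0) (DeltaSub k comul counit one (tl Ψ))
          ∘ₗ comul := by
      rw [hDI, ← LinearMap.comp_assoc, map_comp_consTP, LinearMap.comp_assoc]
      congr 1
      rw [← LinearMap.comp_assoc, ← TensorProduct.map_comp, LinearMap.comp_id, htail, ih (tl Ψ)]
    by_cases h0 : (0 : Fin (n+1)) ∈ Ψ
    · have hg0 : g 0 = LinearMap.id := if_pos h0
      rw [step1, hg0, DeltaSub_card_cast k comul counit one Ψ (card_tl_of_mem h0)]
      have hDI' : DeltaIter k comul counit ((tl Ψ).card + 1)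
          = consTP k C (tl Ψ).card ∘ₗ
            TensorProduct.map LinearMap.id (DeltaIter k comul counit (tl Ψ).card)
            ∘ₗ comul := rfl
      rw [hDI', ← LinearMap.comp_assoc, ← LinearMap.comp_assoc,
        restr_mem k C one Ψ h0 (card_tl_of_mem h0)]
      rw [LinearMap.comp_assoc, LinearMap.comp_assoc]
      congr 1
      rw [← LinearMap.comp_assoc, ← TensorProduct.map_comp, LinearMap.comp_id]
      rfl
    · have hg0 : g 0 = e := if_neg h0
      rw [step1, hg0, he, comul_counit_lemma k comul counit one hcu,
        DeltaSub_card_cast k comul counit one Ψ (card_tl_of_not_mem h0),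
        restr_not_mem k C one Ψ h0 (card_tl_of_not_mem h0)]
      rw [LinearMap.comp_assoc, LinearMap.comp_assoc]
      rfl

end IEAux

open IEAux

/-- **Lemma 2.6(a).** In any coaugmented `k`-coalgebra `C` (with group-like
coaugmentation element `one = u(1)`), the inclusion–exclusion maps agree with
the closed formula: for every `n ≥ 1`,
`δ'_{{1,…,n}} := Σ_{Ψ ⊆ {1,…,n}} (−1)^{n−|Ψ|} Δ_Ψ = (id_C − u∘ε)^{⊗n} ∘ Δ^n`. -/
theorem inclusion_exclusion_delta
    (k : Type) [Field k] (C : Type) [AddCommGroup C] [Module k C] [Coalgebra k C]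
    (one : C) (hcomul : Coalgebra.comul one = one ⊗ₜ[k] one)
    (hcounit : Coalgebra.counit one = (1 : k))
    (n : ℕ) (hn : 1 ≤ n) :
    (∑ Ψ : Finset (Fin n), ((-1 : ℤ) ^ (n - Ψ.card)) •
        DeltaSub k Coalgebra.comul Coalgebra.counit one Ψ)
      = deltaN k Coalgebra.comul Coalgebra.counit one n := by
  have hcu := Coalgebra.rTensor_counit_comp_comul (R := k) (A := C)
  set e := LinearMap.toSpanSingleton k C one ∘ₗ (Coalgebra.counit (R := k) (A := C)) with he
  have hkey := key k Coalgebra.comul Coalgebra.counit one hcu n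
  have hexp : (PiTensorProduct.map fun _ : Fin n => proj k Coalgebra.counit one)
      = ∑ Ψ : Finset (Fin n), ((-1 : ℤ)^(n - Ψ.card)) •
          PiTensorProduct.map (fun i => if i ∈ Ψ then LinearMap.id else e) := by
    have h1 : (fun _ : Fin n => proj k Coalgebra.counit one)
        = (fun _ : Fin n => (LinearMap.id : C →ₗ[k] C)) + fun _ => -e := by
      funext i; simp [proj, he, sub_eq_add_neg]
    rw [show (PiTensorProduct.map fun _ : Fin n => proj k Coalgebra.counit one)
        = PiTensorProduct.mapMultilinear k (fun _ : Fin n => C) (fun _ => C)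
            ((fun _ : Fin n => (LinearMap.id : C →ₗ[k] C)) + fun _ => -e) from by
      rw [← h1]; rfl]
    rw [MultilinearMap.map_add_univ]
    refine Finset.sum_congr rfl fun Ψ _ => ?_
    have h2 : Ψ.piecewise (fun _ : Fin n => (LinearMap.id : C →ₗ[k] C)) (fun _ => -e)
        = Ψᶜ.piecewise
            (fun i => (-1 : k) • (Ψ.piecewise (fun _ => LinearMap.id) (fun _ => e)) i)
            (Ψ.piecewise (fun _ => LinearMap.id) (fun _ => e)) := by
      funext i
      by_cases hi : i ∈ Ψ
      · rw [Finset.piecewise_eq_of_mem _ _ _ hi,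
          Finset.piecewise_eq_of_notMem _ _ _ (by simpa using hi),
          Finset.piecewise_eq_of_mem _ _ _ hi]
      · rw [Finset.piecewise_eq_of_notMem _ _ _ hi,
          Finset.piecewise_eq_of_mem _ _ _ (by simpa using hi),
          Finset.piecewise_eq_of_notMem _ _ _ hi, neg_smul, one_smul]
    rw [h2, MultilinearMap.map_piecewise_smul]
    simp only [PiTensorProduct.mapMultilinear_apply]
    have hcard : Ψᶜ.card = n - Ψ.card := by
      rw [Finset.card_compl]; simp
    rw [Finset.prod_const, hcard]
    have h3 : Ψ.piecewise (fun _ : Fin n => (LinearMap.id : C →ₗ[k] C)) (fun _ => e)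
        = fun i => if i ∈ Ψ then LinearMap.id else e := by
      funext i; by_cases hi : i ∈ Ψ
      · rw [Finset.piecewise_eq_of_mem _ _ _ hi, if_pos hi]
      · rw [Finset.piecewise_eq_of_notMem _ _ _ hi, if_neg hi]
    rw [h3]
    have h4 : (((-1 : ℤ)^(n - Ψ.card) : ℤ) : k) = (-1 : k)^(n - Ψ.card) := by
      push_cast; ring
    rw [← Int.cast_smul_eq_zsmul k, h4]
  show _ = (PiTensorProduct.map fun _ : Fin n => proj k Coalgebra.counit one) ∘ₗ
    DeltaIter k Coalgebra.comul Coalgebra.counit n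
  rw [hexp]
  apply LinearMap.ext; intro x
  simp only [LinearMap.coe_sum, Finset.sum_apply, LinearMap.comp_apply, LinearMap.smul_apply]
  refine Finset.sum_congr rfl fun Ψ _ => ?_
  rw [← hkey Ψ]
  rfl
end
end

section
/- Let C be a counital coassociative k-coalgebra and {F_z}_{z∈ℤ} an exhaustive coalgebra filtration of C, i.e. an increasing family of subspaces with ⋃_{z∈ℤ} F_z = C and Δ(F_z) ⊆ Σ_{r+s=z} F_r ⊗ F_s for all z ∈ ℤ. Then the intersection F_↓ := ⋂_{z∈ℤ} F_z satisfies Δ(F_↓) ⊆ C ⊗ F_↓ + F_↓ ⊗ C, so that C/F_↓ inherits a quotient coalgebra structure. (Lemma 1.6) -/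
open TensorProduct

noncomputable section

namespace CDP

variable (k : Type) [Field k] (C : Type) [AddCommGroup C] [Module k C]

/-- For subspaces `X, Y ⊆ C`, the subspace `X ⊗ Y ⊆ C ⊗ C`. -/
def tsub (X Y : Submodule k C) : Submodule k (C ⊗[k] C) :=
  LinearMap.range (TensorProduct.map X.subtype Y.subtype)

end CDP

open CDP

section Aux

variable {k : Type} [Field k] {C : Type} [AddCommGroup C] [Module k C]

lemma tmul_mem_tsub {X Y : Submodule k C} {x y : C} (hx : x ∈ X) (hy : y ∈ Y) :
    x ⊗ₜ[k] y ∈ tsub k C X Y :=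
  ⟨(⟨x, hx⟩ : X) ⊗ₜ[k] (⟨y, hy⟩ : Y), rfl⟩

lemma tsub_eq_span (X Y : Submodule k C) :
    tsub k C X Y =
      Submodule.span k {t : C ⊗[k] C | ∃ x ∈ X, ∃ y ∈ Y, x ⊗ₜ[k] y = t} := by
  apply le_antisymm
  · rintro _ ⟨v, rfl⟩
    induction v using TensorProduct.induction_on with
    | zero => simp
    | tmul a b => exact Submodule.subset_span ⟨a, a.2, b, b.2, by simp⟩
    | add a b ha hb => rw [map_add]; exact add_mem ha hb
  · rw [Submodule.span_le]
    rintro _ ⟨x, hx, y, hy, rfl⟩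
    exact tmul_mem_tsub hx hy

lemma tsub_mono {X X' Y Y' : Submodule k C} (hX : X ≤ X') (hY : Y ≤ Y') :
    tsub k C X Y ≤ tsub k C X' Y' := by
  rw [tsub_eq_span, tsub_eq_span, Submodule.span_le]
  rintro _ ⟨x, hx, y, hy, rfl⟩
  exact Submodule.subset_span ⟨x, hX hx, y, hY hy, rfl⟩

lemma comm_mem_tsub {X Y : Submodule k C} {u : C ⊗[k] C} (h : u ∈ tsub k C X Y) :
    TensorProduct.comm k C C u ∈ tsub k C Y X := by
  obtain ⟨v, rfl⟩ := h
  induction v using TensorProduct.induction_on with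
  | zero => simp
  | tmul a b => exact tmul_mem_tsub b.2 a.2
  | add a b ha hb => rw [map_add, map_add]; exact add_mem ha hb

/-- Representation of a tensor as a finite sum `∑ b i ⊗ c i` over a basis of the left factor. -/
lemma exists_rep {ι : Type*} (b : Module.Basis ι k C) (u : C ⊗[k] C) :
    ∃ (s : Finset ι) (c : ι → C), u = ∑ i ∈ s, b i ⊗ₜ[k] c i := by
  classical
  induction u using TensorProduct.induction_on with
  | zero => exact ⟨∅, 0, by simp⟩
  | tmul x y =>
      refine ⟨(b.repr x).support, fun i => (b.repr x) i • y, ?_⟩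
      conv_lhs => rw [← b.linearCombination_repr x]
      rw [Finsupp.linearCombination_apply, Finsupp.sum, TensorProduct.sum_tmul]
      exact Finset.sum_congr rfl fun i _ => TensorProduct.smul_tmul _ _ _
  | add x y hx hy =>
      obtain ⟨s, c, rfl⟩ := hx
      obtain ⟨t, d, rfl⟩ := hy
      refine ⟨s ∪ t, fun i => (if i ∈ s then c i else 0) + (if i ∈ t then d i else 0), ?_⟩
      simp only [TensorProduct.tmul_add, Finset.sum_add_distrib, TensorProduct.tmul_ite,
        Finset.sum_ite_mem, Finset.union_inter_cancel_left, Finset.union_inter_cancel_right]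

/-- The contraction functional associated with a basis vector of the left factor. -/
def contrR {ι : Type*} (b : Module.Basis ι k C) (j : ι) : C ⊗[k] C →ₗ[k] C :=
  (TensorProduct.lid k C).toLinearMap ∘ₗ LinearMap.rTensor C (b.coord j)

lemma contrR_tmul {ι : Type*} (b : Module.Basis ι k C) (j : ι) (x y : C) :
    contrR b j (x ⊗ₜ[k] y) = b.coord j x • y := by
  simp [contrR]

lemma contrR_mem {ι : Type*} (b : Module.Basis ι k C) (j : ι) {Y : Submodule k C} {u : C ⊗[k] C}
    (h : u ∈ tsub k C ⊤ Y) : contrR b j u ∈ Y := by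
  obtain ⟨v, rfl⟩ := h
  induction v using TensorProduct.induction_on with
  | zero => simp
  | tmul a y =>
      rw [TensorProduct.map_tmul, contrR_tmul]
      exact Y.smul_mem _ y.2
  | add a bb ha hb => rw [map_add, map_add]; exact add_mem ha hb

lemma rTensor_mem_tsub_top (f : C →ₗ[k] C) {Y : Submodule k C} {u : C ⊗[k] C}
    (h : u ∈ tsub k C ⊤ Y) : LinearMap.rTensor C f u ∈ tsub k C ⊤ Y := by
  obtain ⟨v, rfl⟩ := h
  induction v using TensorProduct.induction_on with
  | zero => simp
  | tmul a y =>
      rw [TensorProduct.map_tmul, LinearMap.rTensor_tmul]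
      exact tmul_mem_tsub Submodule.mem_top y.2
  | add a bb ha hb => rw [map_add, map_add]; exact add_mem ha hb

lemma rTensor_eq_zero_of_tsub_top {f : C →ₗ[k] C} {X : Submodule k C}
    (hf : ∀ x ∈ X, f x = 0) {u : C ⊗[k] C} (h : u ∈ tsub k C X ⊤) :
    LinearMap.rTensor C f u = 0 := by
  obtain ⟨v, rfl⟩ := h
  induction v using TensorProduct.induction_on with
  | zero => simp
  | tmul a y =>
      rw [TensorProduct.map_tmul, LinearMap.rTensor_tmul]
      rw [show f (X.subtype a) = 0 from hf a a.2, TensorProduct.zero_tmul]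
  | add a bb ha hb => rw [map_add, map_add, ha, hb, add_zero]

/-- Intersection lemma: if `u ∈ C ⊗ Yᵢ` for all `i`, then `u ∈ C ⊗ ⋂ Yᵢ`. -/
lemma mem_tsub_top_iInf {ι : Type} (Y : ι → Submodule k C) {u : C ⊗[k] C}
    (h : ∀ i, u ∈ tsub k C ⊤ (Y i)) : u ∈ tsub k C ⊤ (⨅ i, Y i) := by
  classical
  obtain b := Module.Basis.ofVectorSpace k C
  obtain ⟨s, c, rfl⟩ := exists_rep b u
  have hc : ∀ j ∈ s, contrR b j (∑ i ∈ s, b i ⊗ₜ[k] c i) = c j := by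
    intro j hj
    rw [map_sum]
    calc ∑ i ∈ s, contrR b j (b i ⊗ₜ[k] c i)
        = ∑ i ∈ s, if i = j then c i else 0 := by
          refine Finset.sum_congr rfl fun i _ => ?_
          rw [contrR_tmul, Module.Basis.coord_apply, Module.Basis.repr_self, Finsupp.single_apply]
          split_ifs <;> simp
      _ = c j := by rw [Finset.sum_ite_eq' s j c, if_pos hj]
  refine sum_mem fun j hj => tmul_mem_tsub Submodule.mem_top (Submodule.mem_iInf _ |>.mpr fun i => ?_)
  rw [← hc j hj]
  exact contrR_mem b j (h i)

/-- If `t ∈ X ⊗ C + C ⊗ Yᵢ` for all `i`, then `t ∈ X ⊗ C + C ⊗ ⋂ Yᵢ`. -/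
lemma mem_sup_iInf_right {ι : Type} (X : Submodule k C) (Y : ι → Submodule k C)
    {t : C ⊗[k] C} (h : ∀ i, t ∈ tsub k C X ⊤ ⊔ tsub k C ⊤ (Y i)) :
    t ∈ tsub k C X ⊤ ⊔ tsub k C ⊤ (⨅ i, Y i) := by
  obtain ⟨X', hc⟩ := Submodule.exists_isCompl X
  set p : C →ₗ[k] C := X.subtype ∘ₗ (X.linearProjOfIsCompl X' hc) with hp
  set q : C →ₗ[k] C := LinearMap.id - p with hq
  have hpx : ∀ x ∈ X, p x = x := by
    intro x hx
    simp [hp]; exact congrArg Subtype.val (Submodule.projectionOnto_apply_left hc ⟨x, hx⟩)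
  have hpr : ∀ x : C, p x ∈ X := fun x => (X.linearProjOfIsCompl X' hc x).2
  have h1 : ∀ w : C ⊗[k] C, LinearMap.rTensor C p w ∈ tsub k C X ⊤ := by
    intro w
    induction w using TensorProduct.induction_on with
    | zero => simp
    | tmul x y => simpa [LinearMap.rTensor_tmul] using tmul_mem_tsub (hpr x) Submodule.mem_top
    | add a bb ha hb => rw [map_add]; exact add_mem ha hb
  have h2 : LinearMap.rTensor C q t ∈ tsub k C ⊤ (⨅ i, Y i) := by
    apply mem_tsub_top_iInf
    intro i
    obtain ⟨a, ha, bb, hb, rfl⟩ := Submodule.mem_sup.mp (h i)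
    have hza : LinearMap.rTensor C q a = 0 := by
      refine rTensor_eq_zero_of_tsub_top (fun x hx => ?_) ha
      simp [hq, LinearMap.sub_apply, hpx x hx]
    rw [map_add, hza, zero_add]
    exact rTensor_mem_tsub_top q hb
  have hsplit : t = LinearMap.rTensor C p t + LinearMap.rTensor C q t := by
    have : LinearMap.rTensor C p + LinearMap.rTensor C q = LinearMap.id := by
      rw [← LinearMap.rTensor_add]
      have : p + q = LinearMap.id := by rw [hq]; abel
      rw [this, LinearMap.rTensor_id]
    calc t = (LinearMap.rTensor C p + LinearMap.rTensor C q) t := by rw [this]; rfl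
    _ = _ := rfl
  rw [hsplit]
  exact Submodule.add_mem_sup (h1 t) h2

/-- If `t ∈ Yᵢ ⊗ C + C ⊗ W` for all `i`, then `t ∈ (⋂ Yᵢ) ⊗ C + C ⊗ W`. -/
lemma comm_comm (u : C ⊗[k] C) :
    TensorProduct.comm k C C (TensorProduct.comm k C C u) = u := by
  induction u using TensorProduct.induction_on with
  | zero => simp
  | tmul x y => simp
  | add a b ha hb => rw [map_add, map_add, ha, hb]

/-- If `t ∈ Yᵢ ⊗ C + C ⊗ W` for all `i`, then `t ∈ (⋂ Yᵢ) ⊗ C + C ⊗ W`. -/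
lemma mem_sup_iInf_left {ι : Type} (W : Submodule k C) (Y : ι → Submodule k C)
    {t : C ⊗[k] C} (h : ∀ i, t ∈ tsub k C (Y i) ⊤ ⊔ tsub k C ⊤ W) :
    t ∈ tsub k C (⨅ i, Y i) ⊤ ⊔ tsub k C ⊤ W := by
  set e := TensorProduct.comm k C C with he'
  have he : e t ∈ tsub k C W ⊤ ⊔ tsub k C ⊤ (⨅ i, Y i) := by
    apply mem_sup_iInf_right
    intro i
    obtain ⟨a, ha, bb, hb, hab⟩ := Submodule.mem_sup.mp (h i)
    have : e t = e bb + e a := by rw [← hab, map_add]; abel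
    rw [this]
    exact Submodule.add_mem_sup (comm_mem_tsub hb) (comm_mem_tsub ha)
  obtain ⟨a, ha, bb, hb, hab⟩ := Submodule.mem_sup.mp he
  have : t = e a + e bb := by
    rw [← map_add, hab, he', comm_comm]
  rw [this]
  exact Submodule.mem_sup.mpr ⟨e bb, comm_mem_tsub hb, e a, comm_mem_tsub ha, by abel⟩

end Aux

/-- **Lemma 1.6.** Let `C` be a counital coassociative `k`-coalgebra and
`{F_z}_{z ∈ ℤ}` an exhaustive coalgebra filtration of `C`, i.e. an increasing
family of subspaces with `⋃_z F_z = C` and `Δ(F_z) ⊆ Σ_{r+s=z} F_r ⊗ F_s` for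
all `z`.  Then `F_↓ := ⋂_z F_z` satisfies `Δ(F_↓) ⊆ C ⊗ F_↓ + F_↓ ⊗ C`, so
that `C / F_↓` inherits a quotient coalgebra structure. -/
theorem inf_of_exhaustive_coalgebra_filtration_is_coideal
    (k : Type) [Field k] (C : Type) [AddCommGroup C] [Module k C] [Coalgebra k C]
    (F : ℤ → Submodule k C) (hmono : Monotone F)
    (hexh : (⨆ z : ℤ, F z) = ⊤)
    (hfil : ∀ z : ℤ,
      Submodule.map (Coalgebra.comul : C →ₗ[k] C ⊗[k] C) (F z) ≤
        ⨆ (p : ℤ × ℤ) (_ : p.1 + p.2 = z), tsub k C (F p.1) (F p.2)) :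
    Submodule.map (Coalgebra.comul : C →ₗ[k] C ⊗[k] C) (⨅ z : ℤ, F z) ≤
      tsub k C ⊤ (⨅ z : ℤ, F z) ⊔ tsub k C (⨅ z : ℤ, F z) ⊤ := by
  rintro _ ⟨x, hx, rfl⟩
  set t : C ⊗[k] C := Coalgebra.comul x with ht
  have step1 : ∀ a b : ℤ, t ∈ tsub k C (F a) ⊤ ⊔ tsub k C ⊤ (F b) := by
    intro a b
    have hxz : x ∈ F (a + b) := (Submodule.mem_iInf F).mp hx (a + b)
    have h0 : t ∈ ⨆ (p : ℤ × ℤ) (_ : p.1 + p.2 = a + b), tsub k C (F p.1) (F p.2) :=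
      hfil (a + b) ⟨x, hxz, rfl⟩
    have hle : (⨆ (p : ℤ × ℤ) (_ : p.1 + p.2 = a + b), tsub k C (F p.1) (F p.2)) ≤
        tsub k C (F a) ⊤ ⊔ tsub k C ⊤ (F b) := by
      refine iSup_le fun p => iSup_le fun hp => ?_
      rcases le_or_gt p.1 a with hpa | hpa
      · exact le_trans (tsub_mono (hmono hpa) le_top) le_sup_left
      · have hpb : p.2 ≤ b := by omega
        exact le_trans (tsub_mono le_top (hmono hpb)) le_sup_right
    exact hle h0
  have step2 : ∀ a : ℤ, t ∈ tsub k C (F a) ⊤ ⊔ tsub k C ⊤ (⨅ z, F z) := fun a =>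
    mem_sup_iInf_right (F a) F (step1 a)
  have step3 : t ∈ tsub k C (⨅ z, F z) ⊤ ⊔ tsub k C ⊤ (⨅ z, F z) :=
    mem_sup_iInf_left (⨅ z, F z) F step2
  rwa [sup_comm] at step3
end
end

section
/- Let k be a field and G a group, and let k[G] be the group Hopf algebra of G over k (with each g ∈ G group-like: Δ(g) = g ⊗ g, ε(g) = 1). Then for every n ∈ ℕ, ker δ_{n+1} = k·1; hence k[G]′ := ⋃_{n∈ℕ} ker δ_{n+1} = k·1. (Theorem 8.2) -/
open TensorProduct PiTensorProduct

noncomputable section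

namespace CDP

variable (k : Type) [Field k] (C : Type) [AddCommGroup C] [Module k C]

variable {C} in
/-- The `δ`-filtration `D_n := ker δ_{n+1}`. -/
def Dfil (comul : C →ₗ[k] C ⊗[k] C) (counit : C →ₗ[k] k) (one : C) (n : ℕ) :
    Submodule k C :=
  LinearMap.ker (deltaN k comul counit one (n+1))

end CDP


open CDP

noncomputable section GroupAlgebra

variable (k : Type) [Field k] (G : Type) [Group G]

/-- The diagonal `G →* k[G] ⊗ k[G]`, `g ↦ g ⊗ g`. -/
def diagGA : G →* MonoidAlgebra k G ⊗[k] MonoidAlgebra k G where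
  toFun g := MonoidAlgebra.of k G g ⊗ₜ[k] MonoidAlgebra.of k G g
  map_one' := by simp [Algebra.TensorProduct.one_def, MonoidAlgebra.one_def]
  map_mul' g h := by simp [Algebra.TensorProduct.tmul_mul_tmul]

/-- The comultiplication of the group Hopf algebra `k[G]`, determined by
`Δ(g) = g ⊗ g` for `g ∈ G`. -/
def comulGA : MonoidAlgebra k G →ₐ[k] MonoidAlgebra k G ⊗[k] MonoidAlgebra k G :=
  MonoidAlgebra.lift k _ G (diagGA k G)

/-- The counit of the group Hopf algebra `k[G]`, determined by `ε(g) = 1` for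
`g ∈ G`. -/
def counitGA : MonoidAlgebra k G →ₐ[k] k :=
  MonoidAlgebra.lift k k G 1


section Aux

open CDP

lemma consTP_const (k : Type) [Field k] (C : Type) [AddCommGroup C] [Module k C]
    (n : ℕ) (x : C) :
    consTP k C n (x ⊗ₜ[k] tprod k (fun _ : Fin n => x)) =
      tprod k (fun _ : Fin (n+1) => x) := by
  unfold consTP tpowSplit tpowOne
  simp only [LinearMap.comp_apply, TensorProduct.map_tmul, LinearMap.id_apply,
    LinearEquiv.coe_coe, LinearEquiv.trans_symm, LinearEquiv.trans_apply]
  rw [show (PiTensorProduct.subsingletonEquiv (s := fun _ : Fin 1 => C) (R := k) (0 : Fin 1)).symm x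
      = tprod k (fun _ : Fin 1 => x) by
    apply (PiTensorProduct.subsingletonEquiv (0 : Fin 1)).injective
    simp]
  rw [show ((PiTensorProduct.tmulEquiv k C).symm.symm)
      ((tprod k (fun _ : Fin 1 => x)) ⊗ₜ (tprod k (fun _ : Fin n => x)))
      = tprod k (Sum.elim (fun _ : Fin 1 => x) (fun _ : Fin n => x)) from
    PiTensorProduct.tmulEquiv_apply k C _ _]
  rw [PiTensorProduct.reindex_symm, PiTensorProduct.reindex_tprod,
    PiTensorProduct.reindex_tprod]
  congr 1
  funext i
  have h : ∀ s : Fin 1 ⊕ Fin n,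
      Sum.elim (fun _ : Fin 1 => x) (fun _ : Fin n => x) s = x := by
    rintro (a|b) <;> rfl
  exact h _

variable (k : Type) [Field k] (G : Type) [Group G]

lemma comulGA_of (g : G) :
    comulGA k G (MonoidAlgebra.of k G g) =
      MonoidAlgebra.of k G g ⊗ₜ[k] MonoidAlgebra.of k G g := by
  rw [comulGA, MonoidAlgebra.lift_of]; rfl

lemma counitGA_of (g : G) : counitGA k G (MonoidAlgebra.of k G g) = 1 := by
  rw [counitGA, MonoidAlgebra.lift_of]; rfl

lemma DeltaIter_of (n : ℕ) (g : G) :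
    DeltaIter k (comulGA k G).toLinearMap (counitGA k G).toLinearMap n
      (MonoidAlgebra.of k G g) = tprod k (fun _ : Fin n => MonoidAlgebra.of k G g) := by
  induction n with
  | zero =>
      show (PiTensorProduct.isEmptyEquiv (Fin 0)).symm
        (counitGA k G (MonoidAlgebra.of k G g)) = _
      rw [counitGA_of]
      apply (PiTensorProduct.isEmptyEquiv (Fin 0)).injective
      simp
  | succ n ih =>
      show consTP k (MonoidAlgebra k G) n
        ((TensorProduct.map LinearMap.id
            (DeltaIter k (comulGA k G).toLinearMap (counitGA k G).toLinearMap n))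
          (comulGA k G (MonoidAlgebra.of k G g))) = _
      rw [comulGA_of, TensorProduct.map_tmul, LinearMap.id_apply, ih, consTP_const]

lemma deltaN_of (n : ℕ) (g : G) :
    deltaN k (comulGA k G).toLinearMap (counitGA k G).toLinearMap
      (1 : MonoidAlgebra k G) (n+1) (MonoidAlgebra.of k G g) =
    tprod k (fun _ : Fin (n+1) => MonoidAlgebra.of k G g - 1) := by
  rw [deltaN, LinearMap.comp_apply, DeltaIter_of, PiTensorProduct.map_tprod]
  congr 1
  funext i
  show MonoidAlgebra.of k G g -
    (LinearMap.toSpanSingleton k (MonoidAlgebra k G) 1)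
      (counitGA k G (MonoidAlgebra.of k G g)) = _
  rw [counitGA_of]
  simp [LinearMap.toSpanSingleton]

/-- The coefficient functional at `g`, typed at the monoid algebra. -/
def phi (g : G) : MonoidAlgebra k G →ₗ[k] k :=
  Finsupp.lapply g ∘ₗ (MonoidAlgebra.coeffLinearEquiv k).toLinearMap

lemma phi_of (g h : G) [Decidable (h = g)] :
    phi k G g (MonoidAlgebra.of k G h) = if h = g then (1 : k) else 0 := by
  show (Finsupp.single h (1 : k)) g = _
  exact Finsupp.single_apply

lemma phi_one (g : G) (hg : g ≠ 1) : phi k G g (1 : MonoidAlgebra k G) = 0 := by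
  classical
  rw [← _root_.map_one (MonoidAlgebra.of k G), phi_of]
  exact if_neg (Ne.symm hg)

/-- The evaluation functional on tensor powers given by the coefficient at `g`. -/
def Fg (n : ℕ) (g : G) : (⨂[k]^(n+1) (MonoidAlgebra k G)) →ₗ[k] k :=
  PiTensorProduct.lift
    ((MultilinearMap.mkPiAlgebra k (Fin (n+1)) k).compLinearMap
      (fun _ => phi k G g))

lemma Fg_deltaN (n : ℕ) (g : G) (hg : g ≠ 1) :
    (Fg k G n g) ∘ₗ deltaN k (comulGA k G).toLinearMap (counitGA k G).toLinearMap
        (1 : MonoidAlgebra k G) (n+1) =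
      phi k G g := by
  classical
  apply LinearMap.toAddMonoidHom_injective
  apply MonoidAlgebra.addMonoidHom_ext
  intro h c
  show Fg k G n g
      (deltaN k (comulGA k G).toLinearMap (counitGA k G).toLinearMap
        (1 : MonoidAlgebra k G) (n+1) (MonoidAlgebra.single h c)) =
    phi k G g (MonoidAlgebra.single h c)
  have hs : (MonoidAlgebra.single h c : MonoidAlgebra k G) = c • MonoidAlgebra.of k G h := by
    simp [MonoidAlgebra.smul_of]
  rw [hs]
  rw [(deltaN k (comulGA k G).toLinearMap (counitGA k G).toLinearMap
      (1 : MonoidAlgebra k G) (n+1)).map_smul]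
  rw [deltaN_of]
  rw [(Fg k G n g).map_smul]
  rw [Fg]
  rw [PiTensorProduct.lift.tprod]
  have hval : phi k G g (MonoidAlgebra.of k G h - 1) = if h = g then (1 : k) else 0 := by
    rw [map_sub, phi_of, phi_one k G g hg, sub_zero]
  simp only [MultilinearMap.compLinearMap_apply, MultilinearMap.mkPiAlgebra_apply, hval]
  rw [(phi k G g).map_smul, phi_of]
  by_cases hhg : h = g
  · simp [hhg]
  · simp [hhg, Finset.prod_const, zero_pow (Nat.succ_ne_zero n)]

lemma deltaN_one (n : ℕ) :
    deltaN k (comulGA k G).toLinearMap (counitGA k G).toLinearMap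
      (1 : MonoidAlgebra k G) (n+1) (1 : MonoidAlgebra k G) = 0 := by
  have h := deltaN_of k G n 1
  rw [_root_.map_one] at h
  rw [h]
  exact (PiTensorProduct.tprod k).map_coord_zero (0 : Fin (n+1)) (by simp)

end Aux

/-- **Theorem 8.2.** Let `k` be a field and `G` a group, and let `k[G]` be the
group Hopf algebra of `G` over `k` (with each `g ∈ G` group-like:
`Δ(g) = g ⊗ g`, `ε(g) = 1`).  Then for every `n ∈ ℕ`, `ker δ_{n+1} = k·1`;
hence `k[G]′ = ⋃_{n∈ℕ} ker δ_{n+1} = k·1`. -/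
theorem groupAlgebra_delta_kernels_trivial :
    (∀ n : ℕ,
      Dfil k (comulGA k G).toLinearMap (counitGA k G).toLinearMap
          (1 : MonoidAlgebra k G) n =
        Submodule.span k {(1 : MonoidAlgebra k G)}) ∧
    (⨆ n : ℕ, Dfil k (comulGA k G).toLinearMap (counitGA k G).toLinearMap
          (1 : MonoidAlgebra k G) n) =
      Submodule.span k {(1 : MonoidAlgebra k G)} := by
  have hmain : ∀ n : ℕ,
      Dfil k (comulGA k G).toLinearMap (counitGA k G).toLinearMap
          (1 : MonoidAlgebra k G) n =
        Submodule.span k {(1 : MonoidAlgebra k G)} := by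
    intro n
    apply le_antisymm
    · intro x hx
      rw [Dfil, LinearMap.mem_ker] at hx
      have hcoef : ∀ g : G, g ≠ 1 → phi k G g x = 0 := by
        intro g hg
        have h0 := congrArg (Fg k G n g) hx
        rw [map_zero] at h0
        have h2 := congrArg (fun φ : MonoidAlgebra k G →ₗ[k] k => φ x)
          (Fg_deltaN k G n g hg)
        simp only [LinearMap.comp_apply] at h2
        exact Eq.trans (Eq.symm h2) h0
      rw [Submodule.mem_span_singleton]
      refine ⟨phi k G 1 x, ?_⟩
      rw [MonoidAlgebra.one_def, MonoidAlgebra.smul_single']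
      apply MonoidAlgebra.ext
      apply Finsupp.ext
      intro g
      show (MonoidAlgebra.single (1 : G) (phi k G 1 x * 1)).coeff g = x.coeff g
      classical
      rw [MonoidAlgebra.single_apply]
      by_cases hg : g = 1
      · subst hg
        simp only [if_pos rfl, mul_one]
        rfl
      · rw [if_neg (Ne.symm hg)]
        exact (hcoef g hg).symm
    · rw [Submodule.span_singleton_le_iff_mem, Dfil, LinearMap.mem_ker]
      exact deltaN_one k G n
  exact ⟨hmain, by rw [iSup_congr hmain, iSup_const]⟩

end GroupAlgebra
end
end
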